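/- Let f : 2^U → ℝ be nonnegative, monotone, submodular, let O ⊆ U with |O| ≤ k and OPT = f(O), and let A ⊆ U be such that for every o ∈ O, f(A ∪ {o}) - f(A) ≤ OPT/(4k). Then f(A) ≥ (3/4)·OPT. -/

import Mathlib

theorem boost_ratio_small_set {α : Type*} [Fintype α] [DecidableEq α]
    (f : Finset α → ℝ)
    (hnonneg : ∀ S : Finset α, 0 ≤ f S)
    (hmono : ∀ S T : Finset α, S ⊆ T → f S ≤ f T)
    (hsub : ∀ S T : Finset α, ∀ u : α, S ⊆ T → u ∉ T →
      f (insert u T) - f T ≤ f (insert u S) - f S)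
    (k : ℕ) (hk : 1 ≤ k) (O A : Finset α) (hO : O.card ≤ k)
    (OPT : ℝ) (hOPT : OPT = f O)
    (hmarg : ∀ o ∈ O, f (insert o A) - f A ≤ OPT / (4 * k)) :
    f A ≥ (3 / 4) * OPT := by
  have key : ∀ S : Finset α, f (A ∪ S) - f A ≤ ∑ o ∈ S, (f (insert o A) - f A) := by
    intro S
    induction S using Finset.induction_on with
    | empty => simp
    | insert a S ha ih =>
      rw [Finset.sum_insert ha]
      by_cases haA : a ∈ A ∪ S
      · have : A ∪ insert a S = A ∪ S := by
          ext x; simp only [Finset.mem_union, Finset.mem_insert]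
          constructor
          · rintro (h | rfl | h)
            · exact Or.inl h
            · simpa using haA
            · exact Or.inr h
          · rintro (h | h); exacts [Or.inl h, Or.inr (Or.inr h)]
        rw [this]
        have ha2 : 0 ≤ f (insert a A) - f A := by
          have := hmono A (insert a A) (Finset.subset_insert a A)
          linarith
        linarith
      · have h1 : f (insert a (A ∪ S)) - f (A ∪ S) ≤ f (insert a A) - f A :=
          hsub A (A ∪ S) a Finset.subset_union_left haA
        rw [Finset.union_insert]
        linarith
  have hOA : OPT ≤ f (A ∪ O) := hOPT ▸ hmono O (A ∪ O) Finset.subset_union_right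
  have hsum : ∑ o ∈ O, (f (insert o A) - f A) ≤ OPT / 4 := by
    calc ∑ o ∈ O, (f (insert o A) - f A) ≤ ∑ _o ∈ O, OPT / (4 * k) :=
          Finset.sum_le_sum hmarg
      _ = O.card * (OPT / (4 * k)) := by rw [Finset.sum_const, nsmul_eq_mul]
      _ ≤ OPT / 4 := by
          have hk' : (0:ℝ) < k := by exact_mod_cast hk
          have hOc : (O.card : ℝ) ≤ k := by exact_mod_cast hO
          have hOPTpos : 0 ≤ OPT := hOPT ▸ hnonneg O
          calc (O.card : ℝ) * (OPT / (4 * k)) ≤ k * (OPT / (4 * k)) :=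
                mul_le_mul_of_nonneg_right hOc (by positivity)
            _ = OPT / 4 := by field_simp
  have := key O
  linarith
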